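/- arXiv:2011.12825 — 7 statements merged into one kernel-verified Lean document; each statement's English description precedes it below -/
import Mathlib

section
/- For any x ∈ ℝ^n, w ∈ ℝ^n and μ > 0, the residual function satisfies min{1, μ}·‖r_1(x, w)‖ ≤ ‖r_μ(x, w)‖ ≤ max{1, μ}·‖r_1(x, w)‖. -/
open scoped RealInnerProductSpace

lemma proj_vi {n : ℕ} {C : Set (EuclideanSpace ℝ (Fin n))}
    (hCconv : Convex ℝ C)
    {P : EuclideanSpace ℝ (Fin n) → EuclideanSpace ℝ (Fin n)}
    (hP : ∀ u, P u ∈ C ∧ ∀ z ∈ C, ‖u - P u‖ ≤ ‖u - z‖)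
    (u : EuclideanSpace ℝ (Fin n)) :
    ∀ z ∈ C, ⟪u - P u, z - P u⟫ ≤ 0 := by
  intro z hz
  set y := P u with hy
  by_cases hzy : z = y
  · simp [hzy]
  · have hK : (0:ℝ) < ‖z - y‖ ^ 2 := by
      exact pow_pos (norm_pos_iff.mpr (sub_ne_zero.mpr hzy)) 2
    by_contra hc
    push_neg at hc
    set c : ℝ := ⟪u - y, z - y⟫ with hcdef
    set t : ℝ := min 1 (c / ‖z - y‖ ^ 2) with htdef
    have ht0 : 0 < t := lt_min one_pos (div_pos hc hK)
    have ht1 : t ≤ 1 := min_le_left _ _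
    have hmem : y + t • (z - y) ∈ C := by
      have h := hCconv (hP u).1 hz (by linarith : (0:ℝ) ≤ 1 - t) ht0.le (by ring)
      have e : (1 - t) • y + t • z = y + t • (z - y) := by module
      rwa [e] at h
    have hle := (hP u).2 _ hmem
    have hrw : u - (y + t • (z - y)) = (u - y) - t • (z - y) := by module
    have hexp : ‖(u - y) - t • (z - y)‖ ^ 2
        = ‖u - y‖ ^ 2 - 2 * t * c + t ^ 2 * ‖z - y‖ ^ 2 := by
      rw [norm_sub_sq_real, real_inner_smul_right, norm_smul, Real.norm_eq_abs,
        abs_of_pos ht0, mul_pow]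
      rw [hcdef]; ring
    have hsq : ‖u - y‖ ^ 2 ≤ ‖(u - y) - t • (z - y)‖ ^ 2 := by
      rw [← hrw]
      exact pow_le_pow_left₀ (norm_nonneg _) hle 2
    have htK : t * ‖z - y‖ ^ 2 ≤ c := by
      have h := min_le_right 1 (c / ‖z - y‖ ^ 2)
      calc t * ‖z - y‖ ^ 2 ≤ (c / ‖z - y‖ ^ 2) * ‖z - y‖ ^ 2 :=
            mul_le_mul_of_nonneg_right h hK.le
        _ = c := div_mul_cancel₀ _ (ne_of_gt hK)
    rw [hexp] at hsq
    nlinarith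

lemma key_ineq {n : ℕ} (ra rb w : EuclideanSpace ℝ (Fin n)) {a b : ℝ}
    (ha : 0 < a) (hab : a ≤ b)
    (h1 : ⟪rb - b • w, rb - ra⟫ ≤ 0) (h2 : ⟪ra - a • w, ra - rb⟫ ≤ 0) :
    ‖ra‖ ≤ ‖rb‖ ∧ a * ‖rb‖ ≤ b * ‖ra‖ := by
  have c1 : ⟪rb, ra⟫ = ⟪ra, rb⟫ := real_inner_comm _ _
  have sA : ⟪ra, ra⟫ = ‖ra‖ ^ 2 := real_inner_self_eq_norm_sq ra
  have sB : ⟪rb, rb⟫ = ‖rb‖ ^ 2 := real_inner_self_eq_norm_sq rb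
  set t : ℝ := ⟪w, rb⟫ - ⟪w, ra⟫ with htdef
  have h1' : ‖rb‖ ^ 2 - ⟪ra, rb⟫ - b * t ≤ 0 := by
    simp only [inner_sub_left, inner_sub_right, real_inner_smul_left] at h1
    rw [htdef]; linarith
  have h2' : ‖ra‖ ^ 2 - ⟪ra, rb⟫ + a * t ≤ 0 := by
    simp only [inner_sub_left, inner_sub_right, real_inner_smul_left] at h2
    rw [htdef]; linarith
  have hcs : ⟪ra, rb⟫ ≤ ‖ra‖ * ‖rb‖ := real_inner_le_norm ra rb
  have hsq : 0 ≤ ‖ra‖ ^ 2 + ‖rb‖ ^ 2 - 2 * ⟪ra, rb⟫ := by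
    have h := real_inner_self_nonneg (x := ra - rb)
    simp only [inner_sub_left, inner_sub_right] at h
    linarith
  have hA : 0 ≤ ‖ra‖ := norm_nonneg _
  have hB : 0 ≤ ‖rb‖ := norm_nonneg _
  have ht : 0 ≤ (b - a) * t := by nlinarith
  have goal1 : ‖ra‖ ≤ ‖rb‖ := by
    rcases le_or_gt 0 t with h0 | h0
    · nlinarith [mul_nonneg ha.le h0]
    · have hle : (b - a) * t ≤ 0 :=
        mul_nonpos_of_nonneg_of_nonpos (sub_nonneg.2 hab) h0.le
      nlinarith [sq_nonneg (‖ra‖ - ‖rb‖)]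
  refine ⟨goal1, ?_⟩
  have k1 : a * (‖rb‖ ^ 2 - ⟪ra, rb⟫ - b * t) ≤ 0 :=
    mul_nonpos_of_nonneg_of_nonpos ha.le h1'
  have k2 : b * (‖ra‖ ^ 2 - ⟪ra, rb⟫ + a * t) ≤ 0 :=
    mul_nonpos_of_nonneg_of_nonpos (ha.le.trans hab) h2'
  rcases eq_or_lt_of_le goal1 with hEq | hlt
  · rw [← hEq]
    exact mul_le_mul_of_nonneg_right hab hA
  · have hsum : a * ‖rb‖ ^ 2 + b * ‖ra‖ ^ 2 ≤ (a + b) * (‖ra‖ * ‖rb‖) := by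
      nlinarith [mul_nonneg (by linarith : (0:ℝ) ≤ a + b) (sub_nonneg.2 hcs)]
    have hfac : (a * ‖rb‖ - b * ‖ra‖) * (‖rb‖ - ‖ra‖) ≤ 0 := by nlinarith
    nlinarith [hfac, hlt]

lemma res_mono {n : ℕ} {C : Set (EuclideanSpace ℝ (Fin n))}
    (hCconv : Convex ℝ C)
    {P : EuclideanSpace ℝ (Fin n) → EuclideanSpace ℝ (Fin n)}
    (hP : ∀ u, P u ∈ C ∧ ∀ z ∈ C, ‖u - P u‖ ≤ ‖u - z‖)
    (x w : EuclideanSpace ℝ (Fin n)) {a b : ℝ} (ha : 0 < a) (hab : a ≤ b) :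
    ‖x - P (x - a • w)‖ ≤ ‖x - P (x - b • w)‖ ∧
      a * ‖x - P (x - b • w)‖ ≤ b * ‖x - P (x - a • w)‖ := by
  have h1 : ⟪(x - b • w) - P (x - b • w), P (x - a • w) - P (x - b • w)⟫ ≤ 0 :=
    proj_vi hCconv hP _ _ (hP (x - a • w)).1
  have h2 : ⟪(x - a • w) - P (x - a • w), P (x - b • w) - P (x - a • w)⟫ ≤ 0 :=
    proj_vi hCconv hP _ _ (hP (x - b • w)).1
  have e1 : (x - b • w) - P (x - b • w) = (x - P (x - b • w)) - b • w := by abel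
  have e2 : P (x - a • w) - P (x - b • w)
      = (x - P (x - b • w)) - (x - P (x - a • w)) := by abel
  have e3 : (x - a • w) - P (x - a • w) = (x - P (x - a • w)) - a • w := by abel
  have e4 : P (x - b • w) - P (x - a • w)
      = (x - P (x - a • w)) - (x - P (x - b • w)) := by abel
  rw [e1, e2] at h1
  rw [e3, e4] at h2
  exact key_ineq _ _ _ ha hab h1 h2

theorem stmt_3 {n : ℕ} (C : Set (EuclideanSpace ℝ (Fin n)))
    (hCne : C.Nonempty) (hCc : IsClosed C) (hCconv : Convex ℝ C)
    (P : EuclideanSpace ℝ (Fin n) → EuclideanSpace ℝ (Fin n))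
    (hP : ∀ u, P u ∈ C ∧ ∀ z ∈ C, ‖u - P u‖ ≤ ‖u - z‖)
    (x w : EuclideanSpace ℝ (Fin n)) (μ : ℝ) (hμ : 0 < μ) :
    min 1 μ * ‖x - P (x - (1 : ℝ) • w)‖ ≤ ‖x - P (x - μ • w)‖ ∧
      ‖x - P (x - μ • w)‖ ≤ max 1 μ * ‖x - P (x - (1 : ℝ) • w)‖ := by
  rcases le_total (1 : ℝ) μ with h | h
  · obtain ⟨m1, m2⟩ := res_mono hCconv hP x w one_pos h
    rw [min_eq_left h, max_eq_right h]
    exact ⟨by linarith, by linarith⟩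
  · obtain ⟨m1, m2⟩ := res_mono hCconv hP x w hμ h
    rw [min_eq_right h, max_eq_left h]
    exact ⟨by linarith, by linarith⟩
end

section
/- Let {φ_n}, {θ_n}, {α_n} be sequences in [0, ∞) such that φ_{n+1} ≤ φ_n + α_n(φ_n - φ_{n-1}) + θ_n for all n ≥ 1, with ∑_{n=1}^∞ θ_n < ∞, and suppose there is α with 0 ≤ α_n ≤ α < 1 for all n. Then ∑_{n=1}^∞ max{φ_n - φ_{n-1}, 0} < ∞. -/
theorem stmt_5 (φ θ a : ℕ → ℝ) (α : ℝ)
    (hφ : ∀ n, 0 ≤ φ n) (hθ : ∀ n, 0 ≤ θ n) (ha : ∀ n, 0 ≤ a n)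
    (hrec : ∀ n, 1 ≤ n → φ (n + 1) ≤ φ n + a n * (φ n - φ (n - 1)) + θ n)
    (hθsum : Summable θ) (hαb : ∀ n, a n ≤ α) (hα : α < 1) :
    Summable fun n => max (φ (n + 1) - φ n) 0 := by
  set δ : ℕ → ℝ := fun n => max (φ (n + 1) - φ n) 0 with hδdef
  have hα0 : (0:ℝ) ≤ α := le_trans (ha 0) (hαb 0)
  have hδ0 : ∀ n, 0 ≤ δ n := fun n => le_max_right _ _
  have key : ∀ n, δ (n + 1) ≤ α * δ n + θ (n + 1) := by
    intro n
    have h := hrec (n + 1) (by omega)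
    simp only [Nat.add_sub_cancel] at h
    have h1 : a (n + 1) * (φ (n + 1) - φ n) ≤ α * δ n := by
      calc a (n + 1) * (φ (n + 1) - φ n) ≤ a (n + 1) * δ n :=
            mul_le_mul_of_nonneg_left (le_max_left _ _) (ha _)
        _ ≤ α * δ n := mul_le_mul_of_nonneg_right (hαb _) (hδ0 n)
    have h2 : φ (n + 1 + 1) - φ (n + 1) ≤ α * δ n + θ (n + 1) := by linarith
    have h3 : (0:ℝ) ≤ α * δ n + θ (n + 1) := by
      have := hθ (n + 1); have := hδ0 n; positivity
    exact max_le h2 h3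
  set T := ∑' n, θ n with hT
  have hT0 : 0 ≤ T := tsum_nonneg hθ
  have hbound : ∀ N, ∑ i ∈ Finset.range N, δ i ≤ (δ 0 + T) / (1 - α) := by
    intro N
    rw [le_div_iff₀ (by linarith)]
    match N with
    | 0 => simp; positivity
    | M + 1 =>
      have e1 : ∑ i ∈ Finset.range (M + 1), δ i
          = (∑ i ∈ Finset.range M, δ (i + 1)) + δ 0 :=
        Finset.sum_range_succ' δ M
      have e2 : ∑ i ∈ Finset.range M, δ (i + 1)
          ≤ α * ∑ i ∈ Finset.range M, δ i + ∑ i ∈ Finset.range M, θ (i + 1) := by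
        rw [Finset.mul_sum, ← Finset.sum_add_distrib]
        exact Finset.sum_le_sum fun i _ => key i
      have e3 : ∑ i ∈ Finset.range M, δ i ≤ ∑ i ∈ Finset.range (M + 1), δ i := by
        rw [Finset.sum_range_succ]
        have := hδ0 M; linarith
      have e3' : α * ∑ i ∈ Finset.range M, δ i
          ≤ α * ∑ i ∈ Finset.range (M + 1), δ i :=
        mul_le_mul_of_nonneg_left e3 hα0
      have e4 : ∑ i ∈ Finset.range M, θ (i + 1) ≤ T := by
        have e5 : ∑ i ∈ Finset.range (M + 1), θ i
            = (∑ i ∈ Finset.range M, θ (i + 1)) + θ 0 :=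
          Finset.sum_range_succ' θ M
        have e6 : ∑ i ∈ Finset.range (M + 1), θ i ≤ T :=
          Summable.sum_le_tsum _ (fun i _ => hθ i) hθsum
        have := hθ 0; linarith
      nlinarith [hδ0 0]
  exact summable_of_sum_range_le hδ0 hbound
end

section
/- Let {φ_n}, {θ_n}, {α_n} be sequences in [0, ∞) such that φ_{n+1} ≤ φ_n + α_n(φ_n - φ_{n-1}) + θ_n for all n ≥ 1, with ∑_{n=1}^∞ θ_n < ∞, and suppose there is α with 0 ≤ α_n ≤ α < 1 for all n. Then the limit lim_{n→∞} φ_n exists in [0, ∞). -/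
open Filter

theorem stmt_6 (φ θ a : ℕ → ℝ) (α : ℝ)
    (hφ : ∀ n, 0 ≤ φ n) (hθ : ∀ n, 0 ≤ θ n) (ha : ∀ n, 0 ≤ a n)
    (hrec : ∀ n, 1 ≤ n → φ (n + 1) ≤ φ n + a n * (φ n - φ (n - 1)) + θ n)
    (hθsum : Summable θ) (hαb : ∀ n, a n ≤ α) (hα : α < 1) :
    ∃ L : ℝ, 0 ≤ L ∧ Tendsto φ atTop (nhds L) := by
  have hα0 : 0 ≤ α := (ha 0).trans (hαb 0)
  set δ : ℕ → ℝ := fun n => max (φ (n + 1) - φ n) 0 with hδdef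
  have hδ0 : ∀ n, 0 ≤ δ n := fun n => le_max_right _ _
  have hδle : ∀ n, φ (n + 1) - φ n ≤ δ n := fun n => le_max_left _ _
  have hδrec : ∀ n, δ (n + 1) ≤ α * δ n + θ (n + 1) := by
    intro n
    have h := hrec (n + 1) (Nat.le_add_left 1 n)
    simp only [Nat.add_sub_cancel] at h
    have key : φ (n + 1 + 1) - φ (n + 1) ≤ α * δ n + θ (n + 1) := by
      have h2 : a (n + 1) * (φ (n + 1) - φ n) ≤ α * δ n := by
        rcases le_or_gt 0 (φ (n + 1) - φ n) with hx | hx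
        · calc a (n + 1) * (φ (n + 1) - φ n) ≤ α * (φ (n + 1) - φ n) :=
                mul_le_mul_of_nonneg_right (hαb _) hx
            _ ≤ α * δ n := mul_le_mul_of_nonneg_left (hδle n) hα0
        · calc a (n + 1) * (φ (n + 1) - φ n) ≤ 0 :=
                mul_nonpos_of_nonneg_of_nonpos (ha _) hx.le
            _ ≤ α * δ n := mul_nonneg hα0 (hδ0 n)
      linarith
    have hnn : 0 ≤ α * δ n + θ (n + 1) :=
      add_nonneg (mul_nonneg hα0 (hδ0 n)) (hθ _)
    exact max_le key hnn
  -- partial sums of δ are bounded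
  have hθnn : 0 ≤ ∑' n, θ n := tsum_nonneg hθ
  have hθpart : ∀ N, ∑ i ∈ Finset.range N, θ (i + 1) ≤ ∑' n, θ n := by
    intro N
    calc ∑ i ∈ Finset.range N, θ (i + 1)
        = ∑ i ∈ (Finset.range N).map ⟨Nat.succ, Nat.succ_injective⟩, θ i := by
          rw [Finset.sum_map]; rfl
      _ ≤ ∑' n, θ n := Summable.sum_le_tsum _ (fun i _ => hθ i) hθsum
  have hbound : ∀ N, ∑ i ∈ Finset.range N, δ i ≤ (δ 0 + ∑' n, θ n) / (1 - α) := by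
    intro N
    have hS : ∀ N, ∑ i ∈ Finset.range N, δ i ≤ δ 0 + α * ∑ i ∈ Finset.range N, δ i + ∑' n, θ n := by
      intro N
      have hmono : ∑ i ∈ Finset.range N, δ i ≤ ∑ i ∈ Finset.range (N + 1), δ i := by
        rw [Finset.sum_range_succ]; linarith [hδ0 N]
      have step : ∑ i ∈ Finset.range (N + 1), δ i
          ≤ δ 0 + α * ∑ i ∈ Finset.range N, δ i + ∑' n, θ n := by
        rw [Finset.sum_range_succ']
        have : ∑ i ∈ Finset.range N, δ (i + 1)
            ≤ ∑ i ∈ Finset.range N, (α * δ i + θ (i + 1)) :=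
          Finset.sum_le_sum fun i _ => hδrec i
        rw [Finset.sum_add_distrib, ← Finset.mul_sum] at this
        have := hθpart N
        linarith
      linarith
    have h := hS N
    have h1 : 0 < 1 - α := by linarith
    rw [le_div_iff₀ h1]
    nlinarith
  have hδsum : Summable δ := summable_of_sum_range_le hδ0 hbound
  -- ψ is antitone and bounded below
  set Sd : ℕ → ℝ := fun n => ∑ i ∈ Finset.range n, δ i with hSd
  set ψ : ℕ → ℝ := fun n => φ n - Sd n with hψ
  have hanti : Antitone ψ := by
    apply antitone_nat_of_succ_le
    intro n
    have := hδle n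
    simp only [hψ, hSd, Finset.sum_range_succ]
    linarith
  have hbdd : BddBelow (Set.range ψ) := by
    refine ⟨-∑' n, δ n, ?_⟩
    rintro x ⟨n, rfl⟩
    have h1 : Sd n ≤ ∑' n, δ n := Summable.sum_le_tsum _ (fun i _ => hδ0 i) hδsum
    have := hφ n
    simp only [hψ]
    linarith
  have hψlim : Tendsto ψ atTop (nhds (⨅ n, ψ n)) := tendsto_atTop_ciInf hanti hbdd
  have hSlim : Tendsto Sd atTop (nhds (∑' n, δ n)) := hδsum.hasSum.tendsto_sum_nat
  have hφlim : Tendsto φ atTop (nhds ((⨅ n, ψ n) + ∑' n, δ n)) := by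
    have : φ = fun n => ψ n + Sd n := by funext n; simp [hψ]
    rw [this]
    exact hψlim.add hSlim
  exact ⟨_, ge_of_tendsto' hφlim hφ, hφlim⟩
end

section
/- Let C be a nonempty subset of a real Hilbert space H and {x_n} a sequence in H such that (i) for every x ∈ C, lim_{n→∞} ‖x_n - x‖ exists, and (ii) every weak sequential cluster point of {x_n} lies in C. Then {x_n} converges weakly to a point of C. -/
open Filter RealInnerProductSpace Topology

/-- A bounded sequence in a real Hilbert space has a weakly convergent subsequence. -/
lemma exists_weak_subseq {H : Type*} [NormedAddCommGroup H] [InnerProductSpace ℝ H]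
    [CompleteSpace H] (x : ℕ → H) (M : ℝ) (hM : ∀ n, ‖x n‖ ≤ M) :
    ∃ φ : ℕ → ℕ, StrictMono φ ∧ ∃ p : H,
      ∀ y : H, Tendsto (fun n => ⟪y, x (φ n)⟫) atTop (𝓝 ⟪y, p⟫) := by
  have hM0 : 0 ≤ M := le_trans (norm_nonneg (x 0)) (hM 0)
  -- the closed span of the range of `x`
  set D : Submodule ℝ H := (Submodule.span ℝ (Set.range x)).topologicalClosure with hD
  haveI : CompleteSpace D := (Submodule.isClosed_topologicalClosure _).completeSpace_coe
  have hxD : ∀ n, x n ∈ D :=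
    fun n => (Submodule.span ℝ (Set.range x)).le_topologicalClosure
      (Submodule.subset_span (Set.mem_range_self n))
  -- a countable dense subset
  have hsep : TopologicalSpace.IsSeparable (closure (Submodule.span ℝ (Set.range x) : Set H)) :=
    ((Set.countable_range x).isSeparable.span).closure
  obtain ⟨c, hc_count, hc_sub⟩ := hsep
  obtain ⟨d, hd⟩ : ∃ d : ℕ → H, insert (0 : H) c = Set.range d :=
    Set.Countable.exists_eq_range (hc_count.insert 0) ⟨0, Set.mem_insert 0 c⟩
  have hDd : ∀ z : H, z ∈ D → z ∈ closure (Set.range d) := by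
    intro z hz
    rw [← hd]
    exact closure_mono (Set.subset_insert 0 c) (hc_sub hz)
  -- diagonal extraction via sequential compactness of a product of intervals
  set K : Set (ℕ → ℝ) := Set.univ.pi fun k => Set.Icc (-(‖d k‖ * M)) (‖d k‖ * M) with hK
  have hKc : IsCompact K := isCompact_univ_pi fun k => isCompact_Icc
  set g : ℕ → ℕ → ℝ := fun n k => ⟪d k, x n⟫ with hg
  have hgK : ∀ n, g n ∈ K := by
    intro n k _
    have h1 : |⟪d k, x n⟫| ≤ ‖d k‖ * ‖x n‖ := abs_real_inner_le_norm _ _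
    have h2 : ‖d k‖ * ‖x n‖ ≤ ‖d k‖ * M :=
      mul_le_mul_of_nonneg_left (hM n) (norm_nonneg _)
    have := abs_le.mp (le_trans h1 h2)
    exact ⟨this.1, this.2⟩
  obtain ⟨f, -, φ, hφ, hconv⟩ := hKc.tendsto_subseq hgK
  refine ⟨φ, hφ, ?_⟩
  have hconv' : ∀ k, Tendsto (fun n => ⟪d k, x (φ n)⟫) atTop (𝓝 (f k)) := by
    intro k
    have := (tendsto_pi_nhds.mp hconv) k
    simpa [hg, Function.comp] using this
  -- each inner product sequence is Cauchy
  have key : ∀ y : H, ∃ c : ℝ, Tendsto (fun n => ⟪y, x (φ n)⟫) atTop (𝓝 c) := by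
    intro y
    set z : H := (D.orthogonalProjection y : H) with hz
    have hyz : ∀ n, ⟪y, x n⟫ = ⟪z, x n⟫ := by
      intro n
      have h0 : ⟪y - z, x n⟫ = 0 := D.starProjection_inner_eq_zero y (x n) (hxD n)
      have := inner_sub_left (𝕜 := ℝ) y z (x n)
      linarith [this.symm.trans h0]
    have hzD : z ∈ closure (Set.range d) := hDd z (D.orthogonalProjection y).2
    have hcs : CauchySeq (fun n => ⟪z, x (φ n)⟫) := by
      rw [Metric.cauchySeq_iff]
      intro ε hε
      have hδ : 0 < ε / (3 * (M + 1)) := by positivity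
      obtain ⟨w, hw_mem, hw⟩ := Metric.mem_closure_iff.mp hzD _ hδ
      obtain ⟨k, rfl⟩ := hw_mem
      have hbound : ∀ j, |⟪z - d k, x j⟫| ≤ ε / 3 := by
        intro j
        have h1 : |⟪z - d k, x j⟫| ≤ ‖z - d k‖ * ‖x j‖ := abs_real_inner_le_norm _ _
        have h2 : ‖z - d k‖ * ‖x j‖ ≤ ‖z - d k‖ * M :=
          mul_le_mul_of_nonneg_left (hM j) (norm_nonneg _)
        have h3 : ‖z - d k‖ < ε / (3 * (M + 1)) := by
          rwa [dist_eq_norm] at hw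
        have hMp : (0:ℝ) < M + 1 := by linarith
        have heq : ε / (3 * (M + 1)) * (M + 1) = ε / 3 := by field_simp
        nlinarith [norm_nonneg (z - d k), mul_lt_mul_of_pos_right h3 hMp]
      have hck : CauchySeq (fun n => ⟪d k, x (φ n)⟫) := (hconv' k).cauchySeq
      obtain ⟨N, hN⟩ := Metric.cauchySeq_iff.mp hck (ε / 3) (by linarith)
      refine ⟨N, fun m hm n hn => ?_⟩
      have hNmn := hN m hm n hn
      rw [Real.dist_eq] at hNmn ⊢
      have e1 : ⟪z, x (φ m)⟫ - ⟪z, x (φ n)⟫ =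
          ⟪z - d k, x (φ m)⟫ + (⟪d k, x (φ m)⟫ - ⟪d k, x (φ n)⟫) - ⟪z - d k, x (φ n)⟫ := by
        have em := inner_sub_left (𝕜 := ℝ) z (d k) (x (φ m))
        have en := inner_sub_left (𝕜 := ℝ) z (d k) (x (φ n))
        linarith
      rw [e1]
      have := hbound (φ m)
      have := hbound (φ n)
      have habs : |⟪z - d k, x (φ m)⟫ + (⟪d k, x (φ m)⟫ - ⟪d k, x (φ n)⟫) - ⟪z - d k, x (φ n)⟫|
          ≤ |⟪z - d k, x (φ m)⟫| + |⟪d k, x (φ m)⟫ - ⟪d k, x (φ n)⟫| + |⟪z - d k, x (φ n)⟫| := by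
        calc _ ≤ |⟪z - d k, x (φ m)⟫ + (⟪d k, x (φ m)⟫ - ⟪d k, x (φ n)⟫)| + |⟪z - d k, x (φ n)⟫| :=
              abs_sub _ _
          _ ≤ _ := by
              have := abs_add_le ⟪z - d k, x (φ m)⟫ (⟪d k, x (φ m)⟫ - ⟪d k, x (φ n)⟫)
              linarith
      linarith
    obtain ⟨l, hl⟩ := cauchySeq_tendsto_of_complete hcs
    exact ⟨l, by simpa only [hyz] using hl⟩
  choose lim hlim using key
  -- the limit functional is linear and bounded
  have hadd : ∀ y y' : H, lim (y + y') = lim y + lim y' := by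
    intro y y'
    refine tendsto_nhds_unique ?_ ((hlim y).add (hlim y'))
    have : (fun n => ⟪y + y', x (φ n)⟫) =
        fun n => ⟪y, x (φ n)⟫ + ⟪y', x (φ n)⟫ := by
      funext n; exact inner_add_left _ _ _
    rw [← this]; exact hlim (y + y')
  have hsmul : ∀ (r : ℝ) (y : H), lim (r • y) = r * lim y := by
    intro r y
    refine tendsto_nhds_unique ?_ ((hlim y).const_mul r)
    have : (fun n => ⟪r • y, x (φ n)⟫) = fun n => r * ⟪y, x (φ n)⟫ := by
      funext n; exact real_inner_smul_left _ _ _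
    rw [← this]; exact hlim (r • y)
  have hbdd : ∀ y : H, ‖lim y‖ ≤ M * ‖y‖ := by
    intro y
    rw [Real.norm_eq_abs]
    refine le_of_tendsto (hlim y).abs (Eventually.of_forall fun n => ?_)
    calc |⟪y, x (φ n)⟫| ≤ ‖y‖ * ‖x (φ n)‖ := abs_real_inner_le_norm _ _
      _ ≤ ‖y‖ * M := mul_le_mul_of_nonneg_left (hM _) (norm_nonneg _)
      _ = M * ‖y‖ := mul_comm _ _
  set L : H →ₗ[ℝ] ℝ :=
    { toFun := lim
      map_add' := hadd
      map_smul' := hsmul } with hL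
  set F : H →L[ℝ] ℝ := L.mkContinuous M hbdd with hF
  set p : H := (InnerProductSpace.toDual ℝ H).symm F with hp
  refine ⟨p, fun y => ?_⟩
  have hFy : ⟪p, y⟫ = F y := InnerProductSpace.toDual_symm_apply
  have : ⟪y, p⟫ = lim y := by
    rw [real_inner_comm, hFy]; rfl
  rw [this]
  exact hlim y

theorem stmt_7 {H : Type*} [NormedAddCommGroup H] [InnerProductSpace ℝ H]
    [CompleteSpace H] (C : Set H) (hC : C.Nonempty) (x : ℕ → H)
    (h1 : ∀ p ∈ C, ∃ l : ℝ, Tendsto (fun n => ‖x n - p‖) atTop (nhds l))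
    (h2 : ∀ p : H,
      (∃ φ : ℕ → ℕ, StrictMono φ ∧
        ∀ y : H, Tendsto (fun n => ⟪y, x (φ n)⟫) atTop (nhds ⟪y, p⟫)) → p ∈ C) :
    ∃ p ∈ C, ∀ y : H, Tendsto (fun n => ⟪y, x n⟫) atTop (nhds ⟪y, p⟫) := by
  -- the sequence is bounded
  obtain ⟨q, hq⟩ := hC
  obtain ⟨l0, hl0⟩ := h1 q hq
  obtain ⟨b, hb⟩ := hl0.bddAbove_range
  set M : ℝ := b + ‖q‖ with hMdef
  have hM : ∀ n, ‖x n‖ ≤ M := by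
    intro n
    have h1n : ‖x n - q‖ ≤ b := hb ⟨n, rfl⟩
    have : ‖x n‖ ≤ ‖x n - q‖ + ‖q‖ := by
      calc ‖x n‖ = ‖x n - q + q‖ := by rw [sub_add_cancel]
        _ ≤ ‖x n - q‖ + ‖q‖ := norm_add_le _ _
    linarith
  -- extract a weakly convergent subsequence; its limit is in C
  obtain ⟨φ, hφ, p, hp⟩ := exists_weak_subseq x M hM
  have hpC : p ∈ C := h2 p ⟨φ, hφ, hp⟩
  refine ⟨p, hpC, fun y => ?_⟩
  -- it suffices that every subsequence has a further subsequence converging weakly to p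
  apply tendsto_of_subseq_tendsto
  intro ns hns
  obtain ⟨ms, hms, hnsms⟩ := strictMono_subseq_of_tendsto_atTop hns
  obtain ⟨φ', hφ', p', hp'⟩ :=
    exists_weak_subseq (x ∘ (ns ∘ ms)) M (fun n => hM _)
  have hτ : StrictMono ((ns ∘ ms) ∘ φ') := hnsms.comp hφ'
  have hp'C : p' ∈ C := h2 p' ⟨(ns ∘ ms) ∘ φ', hτ, fun y' => hp' y'⟩
  -- uniqueness of the weak limit, using convergence of ‖x n - ·‖
  obtain ⟨lp, hlp⟩ := h1 p hpC
  obtain ⟨lq, hlq⟩ := h1 p' hp'C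
  set a : ℕ → ℝ := fun n => ‖x n - p‖ * ‖x n - p‖ - ‖x n - p'‖ * ‖x n - p'‖ with ha
  have haL : Tendsto a atTop (𝓝 (lp * lp - lq * lq)) := (hlp.mul hlp).sub (hlq.mul hlq)
  have hid : ∀ n, a n = ‖p‖ ^ 2 - ‖p'‖ ^ 2 + 2 * ⟪p' - p, x n⟫ := by
    intro n
    have e1 : ‖x n - p‖ ^ 2 = ‖x n‖ ^ 2 - 2 * ⟪x n, p⟫ + ‖p‖ ^ 2 := norm_sub_sq_real _ _
    have e2 : ‖x n - p'‖ ^ 2 = ‖x n‖ ^ 2 - 2 * ⟪x n, p'⟫ + ‖p'‖ ^ 2 := norm_sub_sq_real _ _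
    have e3 : ⟪p' - p, x n⟫ = ⟪p', x n⟫ - ⟪p, x n⟫ := inner_sub_left _ _ _
    have e4 : ⟪x n, p⟫ = ⟪p, x n⟫ := real_inner_comm _ _
    have e5 : ⟪x n, p'⟫ = ⟪p', x n⟫ := real_inner_comm _ _
    simp only [ha]
    nlinarith [sq_nonneg (‖x n - p‖), sq_nonneg (‖x n - p'‖)]
  -- compute the limit of `a` along the two subsequences
  have hsub1 : Tendsto (fun n => a (φ n)) atTop
      (𝓝 (‖p‖ ^ 2 - ‖p'‖ ^ 2 + 2 * ⟪p' - p, p⟫)) := by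
    have : Tendsto (fun n => ‖p‖ ^ 2 - ‖p'‖ ^ 2 + 2 * ⟪p' - p, x (φ n)⟫) atTop
        (𝓝 (‖p‖ ^ 2 - ‖p'‖ ^ 2 + 2 * ⟪p' - p, p⟫)) :=
      tendsto_const_nhds.add ((hp (p' - p)).const_mul 2)
    simpa only [← hid] using this
  have hsub2 : Tendsto (fun n => a (((ns ∘ ms) ∘ φ') n)) atTop
      (𝓝 (‖p‖ ^ 2 - ‖p'‖ ^ 2 + 2 * ⟪p' - p, p'⟫)) := by
    have : Tendsto (fun n => ‖p‖ ^ 2 - ‖p'‖ ^ 2 + 2 * ⟪p' - p, x (((ns ∘ ms) ∘ φ') n)⟫) atTop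
        (𝓝 (‖p‖ ^ 2 - ‖p'‖ ^ 2 + 2 * ⟪p' - p, p'⟫)) :=
      tendsto_const_nhds.add ((hp' (p' - p)).const_mul 2)
    simpa only [← hid] using this
  have hsub1' : Tendsto (fun n => a (φ n)) atTop (𝓝 (lp * lp - lq * lq)) :=
    haL.comp hφ.tendsto_atTop
  have hsub2' : Tendsto (fun n => a (((ns ∘ ms) ∘ φ') n)) atTop (𝓝 (lp * lp - lq * lq)) :=
    haL.comp hτ.tendsto_atTop
  have heq1 := tendsto_nhds_unique hsub1 hsub1'
  have heq2 := tendsto_nhds_unique hsub2 hsub2'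
  have hpq : p' = p := by
    have hinner : ⟪p' - p, p' - p⟫ = 0 := by
      have e : ⟪p' - p, p' - p⟫ = ⟪p' - p, p'⟫ - ⟪p' - p, p⟫ := inner_sub_right _ _ _
      linarith
    have := inner_self_eq_zero (𝕜 := ℝ).mp hinner
    exact sub_eq_zero.mp this
  exact ⟨ms ∘ φ', by simpa [hpq] using hp' y⟩
end

section
/- Let C be a nonempty closed convex subset of ℝ^n, x*, w, y, u, ν ∈ ℝ^n and λ > 0. Set y' = P_C(w - λu) and x' = y' - λ(ν - u). If λ‖u - ν‖ ≤ μ‖w - y'‖ for some μ ∈ (0,1), and ⟨ν, y' - x*⟩ ≥ 0, then ‖x' - x*‖² ≤ ‖w - x*‖² - (1 - μ²)‖w - y'‖². -/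
open RealInnerProductSpace

theorem stmt_8 {n : ℕ} (C : Set (EuclideanSpace ℝ (Fin n)))
    (hCne : C.Nonempty) (hCc : IsClosed C) (hCconv : Convex ℝ C)
    (P : EuclideanSpace ℝ (Fin n) → EuclideanSpace ℝ (Fin n))
    (hP : ∀ u, P u ∈ C ∧ ∀ z ∈ C, ‖u - P u‖ ≤ ‖u - z‖)
    (xstar w u ν : EuclideanSpace ℝ (Fin n)) (hxstar : xstar ∈ C)
    (lam μ : ℝ) (hlam : 0 < lam) (hμ0 : 0 < μ) (hμ1 : μ < 1)
    (y' x' : EuclideanSpace ℝ (Fin n))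
    (hy' : y' = P (w - lam • u)) (hx' : x' = y' - lam • (ν - u))
    (hstep : lam * ‖u - ν‖ ≤ μ * ‖w - y'‖)
    (hsol : 0 ≤ ⟪ν, y' - xstar⟫) :
    ‖x' - xstar‖ ^ 2 ≤ ‖w - xstar‖ ^ 2 - (1 - μ ^ 2) * ‖w - y'‖ ^ 2 := by
  set v := w - lam • u with hv
  have hy'C : y' ∈ C := hy' ▸ (hP v).1
  haveI : Nonempty C := hCne.to_subtype
  have hinf : ‖v - y'‖ = ⨅ z : C, ‖v - z‖ := by
    apply le_antisymm
    · exact le_ciInf fun z => hy' ▸ (hP v).2 z z.2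
    · exact ciInf_le ⟨0, fun x ⟨z, hz⟩ => hz ▸ norm_nonneg _⟩ (⟨y', hy'C⟩ : C)
  have hproj : ⟪v - y', xstar - y'⟫ ≤ 0 :=
    ((norm_eq_iInf_iff_real_inner_le_zero hCconv hy'C).1 hinf) xstar hxstar
  have key : ‖x' - xstar‖ ^ 2 = ‖w - xstar‖ ^ 2 - ‖w - y'‖ ^ 2
      + lam ^ 2 * ‖u - ν‖ ^ 2 - 2 * lam * ⟪ν, y' - xstar⟫
      + 2 * ⟪v - y', xstar - y'⟫ := by
    subst hx'
    simp only [hv]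
    simp only [← real_inner_self_eq_norm_sq]
    simp only [inner_sub_left, inner_sub_right, real_inner_smul_left,
      real_inner_smul_right, real_inner_comm]
    ring
  have hsq : lam ^ 2 * ‖u - ν‖ ^ 2 ≤ μ ^ 2 * ‖w - y'‖ ^ 2 := by
    have h1 : 0 ≤ lam * ‖u - ν‖ := mul_nonneg hlam.le (norm_nonneg _)
    nlinarith [hstep]
  nlinarith [hproj, hsol, key, hsq, hlam]
end

section
/- Suppose nonnegative real sequences satisfy Φ_{n+1} - Φ_n ≤ -ξ‖x_{n+1} - x_n‖² for all n ≥ 1 with ξ > 0, Φ_n ≥ ‖x_n - x*‖² - α‖x_{n-1} - x*‖² with 0 ≤ α < 1, and Φ_{n+1} ≥ -α‖x_n - x*‖². Then ∑_{n=1}^∞ ‖x_{n+1} - x_n‖² < ∞, and hence ‖x_{n+1} - x_n‖ → 0 as n → ∞. -/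
open Filter

theorem stmt_13 {d : ℕ} (x : ℕ → EuclideanSpace ℝ (Fin d))
    (xstar : EuclideanSpace ℝ (Fin d)) (Φ : ℕ → ℝ) (α ξ : ℝ)
    (hα0 : 0 ≤ α) (hα1 : α < 1) (hξ : 0 < ξ)
    (hdec : ∀ n, 1 ≤ n → Φ (n + 1) - Φ n ≤ -ξ * ‖x (n + 1) - x n‖ ^ 2)
    (hlow : ∀ n, 1 ≤ n → ‖x n - xstar‖ ^ 2 - α * ‖x (n - 1) - xstar‖ ^ 2 ≤ Φ n)
    (hlow2 : ∀ n, 1 ≤ n → -α * ‖x n - xstar‖ ^ 2 ≤ Φ (n + 1)) :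
    (Summable fun n => ‖x (n + 1) - x n‖ ^ 2) ∧
      Tendsto (fun n => ‖x (n + 1) - x n‖) atTop (nhds 0) := by
  set f : ℕ → ℝ := fun n => ‖x (n + 1) - x n‖ ^ 2 with hf
  have hfnn : ∀ n, 0 ≤ f n := fun n => sq_nonneg _
  have h1α : (0:ℝ) < 1 - α := by linarith
  set C : ℝ := Φ 1 ⊔ 0 with hC
  set B : ℝ := C / (1 - α) + ‖x 0 - xstar‖ ^ 2 with hBdef
  have hCnn : 0 ≤ C := le_max_right _ _
  have hCB : (1 - α) * B = C + (1 - α) * ‖x 0 - xstar‖ ^ 2 := by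
    rw [hBdef, mul_add, mul_div_cancel₀ _ (ne_of_gt h1α)]
  -- Φ is decreasing from index 1
  have hstep : ∀ n, 1 ≤ n → Φ (n + 1) ≤ Φ n := by
    intro n hn
    have := hdec n hn
    nlinarith [hfnn n, sq_nonneg ‖x (n+1) - x n‖]
  have hmono : ∀ n, Φ (n + 1) ≤ Φ 1 := by
    intro n
    induction n with
    | zero => exact le_rfl
    | succ k ih => exact (hstep (k+1) (by omega)).trans ih
  -- boundedness of ‖x n - x*‖²
  have hB : ∀ n, ‖x n - xstar‖ ^ 2 ≤ B := by
    intro n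
    induction n with
    | zero =>
        have : 0 ≤ C / (1 - α) := div_nonneg hCnn (le_of_lt h1α)
        rw [hBdef]; linarith
    | succ k ih =>
        have h1 := hlow (k + 1) (by omega)
        simp only [Nat.add_sub_cancel] at h1
        have h2 : Φ (k + 1) ≤ C := (hmono k).trans (le_max_left _ _)
        have h3 : α * ‖x k - xstar‖ ^ 2 ≤ α * B := by
          exact mul_le_mul_of_nonneg_left ih hα0
        nlinarith [sq_nonneg ‖x 0 - xstar‖]
  have hΦlow : ∀ n, 1 ≤ n → -α * B ≤ Φ (n + 1) := by
    intro n hn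
    have h1 := hlow2 n hn
    have h2 : α * ‖x n - xstar‖ ^ 2 ≤ α * B := mul_le_mul_of_nonneg_left (hB n) hα0
    linarith
  -- telescoping bound
  have hsum : ∀ N, ξ * ∑ k ∈ Finset.range N, f (k + 1) ≤ Φ 1 - Φ (N + 1) := by
    intro N
    induction N with
    | zero => simp
    | succ k ih =>
        have hfk : f (k + 1) = ‖x (k + 1 + 1) - x (k + 1)‖ ^ 2 := rfl
        rw [Finset.sum_range_succ, mul_add, hfk]
        have := hdec (k + 1) (by omega)
        linarith
  have hΦ1 : -α * B ≤ Φ 1 := by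
    have h1 := hΦlow 1 le_rfl
    have h2 := hstep 1 le_rfl
    linarith
  set c : ℝ := f 0 + (Φ 1 + α * B) / ξ with hc
  have hbound : ∀ N, ∑ k ∈ Finset.range N, f k ≤ c := by
    intro N
    cases N with
    | zero =>
        simp only [Finset.range_zero, Finset.sum_empty]
        have : 0 ≤ (Φ 1 + α * B) / ξ := div_nonneg (by linarith) (le_of_lt hξ)
        have := hfnn 0
        rw [hc]; linarith
    | succ N =>
        rw [Finset.sum_range_succ']
        have h1 := hsum N
        have h2 : Φ 1 - Φ (N + 1) ≤ Φ 1 + α * B := by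
          cases N with
          | zero => simp; linarith
          | succ m =>
              have := hΦlow m.succ (by omega)
              linarith
        have h3 : ξ * ∑ k ∈ Finset.range N, f (k + 1) ≤ Φ 1 + α * B := h1.trans h2
        have h4 : ∑ k ∈ Finset.range N, f (k + 1) ≤ (Φ 1 + α * B) / ξ :=
          (le_div_iff₀ hξ).mpr (by linarith)
        rw [hc]; linarith
  have hsummable : Summable f := summable_of_sum_range_le hfnn hbound
  refine ⟨hsummable, ?_⟩
  have h0 : Tendsto f atTop (nhds 0) := hsummable.tendsto_atTop_zero
  have : Tendsto (fun n => Real.sqrt (f n)) atTop (nhds 0) := by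
    simpa [Real.sqrt_zero] using h0.sqrt
  refine this.congr fun n => ?_
  simp [hf, Real.sqrt_sq (norm_nonneg _)]
end

section
/- Let C be a nonempty closed convex subset of ℝ^n and let R(x) denote the output of the cutting-plane Procedure A (iterating y_{k+1} = y_k - 2g(y_k)·w_k/‖w_k‖² with w_k ∈ ∂g(y_k) until y_{k+1} ∈ C, where C = {x : g(x) ≤ 0} and g is convex). Then ‖R(x) - y‖ ≤ ‖x - y‖ for all y ∈ C, and R(x) ∈ C. -/
open RealInnerProductSpace

theorem stmt_15 {n : ℕ} (g : EuclideanSpace ℝ (Fin n) → ℝ)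
    (hg : ConvexOn ℝ Set.univ g)
    (C : Set (EuclideanSpace ℝ (Fin n))) (hC : C = {x | g x ≤ 0})
    (hCne : C.Nonempty)
    (x : EuclideanSpace ℝ (Fin n)) (k : ℕ) (y : ℕ → EuclideanSpace ℝ (Fin n))
    (hy0 : y 0 = x)
    (hstep : ∀ i < k, y i ∉ C ∧
      ∃ w : EuclideanSpace ℝ (Fin n),
        (∀ u, g (y i) + ⟪w, u - y i⟫ ≤ g u) ∧
        y (i + 1) = y i - (2 * g (y i) / ‖w‖ ^ 2) • w)
    (hterm : y k ∈ C) (R : EuclideanSpace ℝ (Fin n)) (hR : R = y k) :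
    R ∈ C ∧ ∀ z ∈ C, ‖R - z‖ ≤ ‖x - z‖ := by
  subst hR
  subst hy0
  refine ⟨hterm, fun z hz => ?_⟩
  have hgz : g z ≤ 0 := by rw [hC] at hz; exact hz
  suffices h : ∀ i ≤ k, ‖y i - z‖ ≤ ‖y 0 - z‖ from h k le_rfl
  intro i hi
  induction i with
  | zero => exact le_rfl
  | succ m ih =>
    have hm : m < k := Nat.lt_of_succ_le hi
    obtain ⟨hmC, w, hw, hstep'⟩ := hstep m hm
    refine le_trans ?_ (ih hm.le)
    have hG : 0 < g (y m) := by
      by_contra h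
      exact hmC (by rw [hC]; exact le_of_not_gt h)
    have hwne : w ≠ 0 := by
      intro h0
      have := hw z
      simp [h0] at this
      linarith
    have hs : (0:ℝ) < ‖w‖ := norm_pos_iff.mpr hwne
    have hs2 : (0:ℝ) < ‖w‖ ^ 2 := by positivity
    set G := g (y m) with hGdef
    set t : ℝ := 2 * G / ‖w‖ ^ 2 with htdef
    have ht : 0 < t := by positivity
    have hts : t * ‖w‖ ^ 2 = 2 * G := by
      rw [htdef]; field_simp
    -- key inner product bound
    have hip : G ≤ ⟪y m - z, w⟫ := by
      have h1 := hw z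
      have h2 : ⟪w, z - y m⟫ ≤ -G := by linarith
      have h3 : ⟪w, y m - z⟫ = -⟪w, z - y m⟫ := by
        rw [← inner_neg_right]; congr 1; abel
      rw [real_inner_comm, h3]; linarith
    -- squared norm computation
    have hsq : ‖y (m+1) - z‖ ^ 2 ≤ ‖y m - z‖ ^ 2 := by
      have hrw : y (m+1) - z = (y m - z) - t • w := by
        rw [hstep']; abel
      rw [hrw, norm_sub_sq_real, real_inner_smul_right, norm_smul, Real.norm_eq_abs]
      have h5 : (|t| * ‖w‖) ^ 2 = t ^ 2 * ‖w‖ ^ 2 := by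
        rw [mul_pow, sq_abs]
      rw [h5]
      have h6 : t ^ 2 * ‖w‖ ^ 2 = t * (t * ‖w‖ ^ 2) := by ring
      rw [h6, hts]
      have h7 : t * G ≤ t * ⟪y m - z, w⟫ := by
        exact mul_le_mul_of_nonneg_left hip ht.le
      nlinarith
    nlinarith [norm_nonneg (y (m+1) - z), norm_nonneg (y m - z), hsq]
end
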